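/- Let A₁, …, A_m be i.i.d. symmetric positive semidefinite random d×d matrices of the form A_j = v_j v_jᵀ with (E‖v_j‖⁴)^{1/4} = μ < ∞, and let M̄ = E[A_1]. Then for every 0 < δ < 1, with probability at least 1 − δ, ‖(1/m)∑_{j=1}^m A_j − M̄‖_op ≤ (√2 μ²/√m) · δ^{−1/2} · log(4d/δ). -/

import Mathlib

open MeasureTheory ProbabilityTheory Matrix
open scoped ENNReal

/-- The `ℓ₂ → ℓ₂` operator norm of a real matrix. -/
noncomputable def opNorm {n m : ℕ} (M : Matrix (Fin n) (Fin m) ℝ) : ℝ :=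
  ‖LinearMap.toContinuousLinearMap (Matrix.toEuclideanLin M)‖

lemma opNorm_le_frobenius {n d : ℕ} (M : Matrix (Fin n) (Fin d) ℝ) :
    opNorm M ≤ Real.sqrt (∑ i, ∑ i', (M i i') ^ 2) := by
  refine ContinuousLinearMap.opNorm_le_bound _ (Real.sqrt_nonneg _) fun x => ?_
  have happ : ∀ i, (LinearMap.toContinuousLinearMap (Matrix.toEuclideanLin M)) x i
      = ∑ i', M i i' * x i' := fun i => rfl
  rw [EuclideanSpace.norm_eq, EuclideanSpace.norm_eq]
  have key : ∑ i, ‖(LinearMap.toContinuousLinearMap (Matrix.toEuclideanLin M)) x i‖ ^ 2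
      ≤ (∑ i, ∑ i', (M i i') ^ 2) * (∑ i', ‖x i'‖ ^ 2) := by
    rw [Finset.sum_mul]
    refine Finset.sum_le_sum fun i _ => ?_
    rw [happ i]
    simp only [Real.norm_eq_abs, sq_abs]
    exact Finset.sum_mul_sq_le_sq_mul_sq _ _ _
  calc Real.sqrt (∑ i, ‖(LinearMap.toContinuousLinearMap (Matrix.toEuclideanLin M)) x i‖ ^ 2)
      ≤ Real.sqrt ((∑ i, ∑ i', (M i i') ^ 2) * (∑ i', ‖x i'‖ ^ 2)) := Real.sqrt_le_sqrt key
    _ = Real.sqrt (∑ i, ∑ i', (M i i') ^ 2) * Real.sqrt (∑ i', ‖x i'‖ ^ 2) :=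
        Real.sqrt_mul (by positivity) _

lemma endgame {Ω : Type*} [MeasurableSpace Ω] (P : Measure Ω) [IsProbabilityMeasure P]
    (E : Set Ω) (δ : ℝ) (hδ : 0 ≤ δ) (hδ1 : δ ≤ 1) (h : P Eᶜ ≤ ENNReal.ofReal δ) :
    ENNReal.ofReal (1 - δ) ≤ P E := by
  have h1 : (1 : ℝ≥0∞) ≤ P E + ENNReal.ofReal δ := by
    calc (1 : ℝ≥0∞) = P (E ∪ Eᶜ) := by rw [Set.union_compl_self]; exact (measure_univ).symm
      _ ≤ P E + P Eᶜ := measure_union_le _ _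
      _ ≤ P E + ENNReal.ofReal δ := add_le_add_right h _
  have h2 : ENNReal.ofReal (1 - δ) + ENNReal.ofReal δ = 1 := by
    rw [← ENNReal.ofReal_add (by linarith) hδ]; norm_num
  exact (ENNReal.add_le_add_iff_right ENNReal.ofReal_ne_top).1 (h2.le.trans h1)

lemma entry_var_bound {Ω : Type*} [MeasurableSpace Ω] (P : Measure Ω) [IsProbabilityMeasure P]
    (m : ℕ) (hm : 0 < m) (f : Fin m → Ω → ℝ)
    (hmem2 : ∀ j, MemLp (f j) 2 P)
    (hpair : Set.Pairwise ↑(Finset.univ : Finset (Fin m)) fun a b => IndepFun (f a) (f b) P)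
    (hEf : ∀ j, ∫ ω, f j ω ∂P = ∫ ω, f ⟨0, hm⟩ ω ∂P)
    (hsq : ∀ j, ∫ ω, (f j ω) ^ 2 ∂P = ∫ ω, (f ⟨0, hm⟩ ω) ^ 2 ∂P) :
    ∫ ω, ((m : ℝ)⁻¹ * (∑ j, f j ω) - ∫ ω', f ⟨0, hm⟩ ω' ∂P) ^ 2 ∂P
      ≤ (m : ℝ)⁻¹ * ∫ ω, (f ⟨0, hm⟩ ω) ^ 2 ∂P := by
  have hm' : (m : ℝ) ≠ 0 := Nat.cast_ne_zero.2 hm.ne'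
  set S : Ω → ℝ := ∑ j, f j with hSdef
  have hS : ∀ ω, S ω = ∑ j, f j ω := fun ω => Finset.sum_apply ω _ _
  have hSmem : MemLp S 2 P := memLp_finset_sum' _ fun j _ => hmem2 j
  have hint : ∀ j, Integrable (f j) P := fun j => (hmem2 j).integrable one_le_two
  have hES : ∫ ω, S ω ∂P = (m : ℝ) * ∫ ω', f ⟨0, hm⟩ ω' ∂P := by
    simp_rw [hS]
    rw [integral_finset_sum _ fun j _ => hint j]
    simp [hEf, Finset.sum_const, nsmul_eq_mul]
  -- variance bound
  have hvar : variance S P ≤ (m : ℝ) * ∫ ω, (f ⟨0, hm⟩ ω) ^ 2 ∂P := by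
    rw [hSdef, IndepFun.variance_sum (fun j _ => hmem2 j) hpair]
    calc ∑ j, variance (f j) P ≤ ∑ j : Fin m, ∫ ω, (f ⟨0, hm⟩ ω) ^ 2 ∂P := by
          refine Finset.sum_le_sum fun j _ => ?_
          have h1 := variance_le_expectation_sq (μ := P) (hmem2 j).aestronglyMeasurable
          simp only [Pi.pow_apply] at h1
          exact h1.trans_eq (hsq j)
      _ = (m : ℝ) * ∫ ω, (f ⟨0, hm⟩ ω) ^ 2 ∂P := by
          simp [Finset.sum_const, nsmul_eq_mul]
  -- rewrite the integrand
  have hveq : variance S P = ∫ ω, (S ω - ∫ ω', S ω' ∂P) ^ 2 ∂P := by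
    have := variance_eq_integral hSmem.aestronglyMeasurable.aemeasurable
    simpa only [Pi.pow_apply, Pi.sub_apply] using this
  have hrw : (fun ω => ((m : ℝ)⁻¹ * (∑ j, f j ω) - ∫ ω', f ⟨0, hm⟩ ω' ∂P) ^ 2)
      = fun ω => ((m : ℝ)⁻¹) ^ 2 * (S ω - ∫ ω', S ω' ∂P) ^ 2 := by
    funext ω
    rw [hES, ← hS ω]
    field_simp
  calc ∫ ω, ((m : ℝ)⁻¹ * (∑ j, f j ω) - ∫ ω', f ⟨0, hm⟩ ω' ∂P) ^ 2 ∂P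
      = ((m : ℝ)⁻¹) ^ 2 * ∫ ω, (S ω - ∫ ω', S ω' ∂P) ^ 2 ∂P := by
        rw [hrw, integral_const_mul]
    _ = ((m : ℝ)⁻¹) ^ 2 * variance S P := by rw [hveq]
    _ ≤ ((m : ℝ)⁻¹) ^ 2 * ((m : ℝ) * ∫ ω, (f ⟨0, hm⟩ ω) ^ 2 ∂P) := by
        exact mul_le_mul_of_nonneg_left hvar (by positivity)
    _ = (m : ℝ)⁻¹ * ∫ ω, (f ⟨0, hm⟩ ω) ^ 2 ∂P := by
        field_simp

set_option maxHeartbeats 1000000 in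
/-- **Matrix concentration for i.i.d. rank-one outer products.**  Let `A_j = v_j v_jᵀ` with
`v_1, …, v_m` i.i.d., `(E‖v‖⁴)^{1/4} = μ < ∞`, and `M̄ = E[A_1]`.  Then for `0 < δ < 1`,
with probability at least `1 − δ`,
`‖(1/m)∑_j A_j − M̄‖_op ≤ (√2 μ² / √m) · δ^{−1/2} · log(4d/δ)`. -/
theorem outer_product_concentration (d m : ℕ) (hm : 0 < m)
    {Ω : Type*} [MeasurableSpace Ω] (P : Measure Ω) [IsProbabilityMeasure P]
    (v : Fin m → Ω → EuclideanSpace ℝ (Fin d)) (hmeas : ∀ j, Measurable (v j))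
    (hindep : iIndepFun v P)
    (hident : ∀ j j', IdentDistrib (v j) (v j') P P)
    (hL4 : Integrable (fun ω => ‖v ⟨0, hm⟩ ω‖ ^ 4) P)
    (μ₄ : ℝ) (hμ : μ₄ = (∫ ω, ‖v ⟨0, hm⟩ ω‖ ^ 4 ∂P) ^ ((1 : ℝ) / 4))
    (Mbar : Matrix (Fin d) (Fin d) ℝ)
    (hMbar : Mbar = Matrix.of fun i i' => ∫ ω, v ⟨0, hm⟩ ω i * v ⟨0, hm⟩ ω i' ∂P)
    (δ : ℝ) (hδ0 : 0 < δ) (hδ1 : δ < 1) :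
    ENNReal.ofReal (1 - δ) ≤
      P {ω | opNorm ((m : ℝ)⁻¹ • ∑ j, vecMulVec (v j ω) (v j ω) - Mbar)
        ≤ Real.sqrt 2 * μ₄ ^ 2 / Real.sqrt m * δ ^ (-(1 : ℝ) / 2)
            * Real.log (4 * d / δ)} := by
  -- trivial case d = 0
  rcases Nat.eq_zero_or_pos d with hd | hd
  · subst hd
    have hop : ∀ M : Matrix (Fin 0) (Fin 0) ℝ, opNorm M = 0 := fun M =>
      le_antisymm (by simpa using opNorm_le_frobenius M) (norm_nonneg _)
    have : {ω | opNorm ((m : ℝ)⁻¹ • ∑ j, vecMulVec (v j ω) (v j ω) - Mbar)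
        ≤ Real.sqrt 2 * μ₄ ^ 2 / Real.sqrt m * δ ^ (-(1 : ℝ) / 2)
            * Real.log (4 * (0:ℕ) / δ)} = Set.univ := by
      ext ω; simp [hop]
    rw [this, measure_univ]
    exact ENNReal.ofReal_le_one.2 (by linarith)
  -- main case
  have hm' : (m : ℝ) ≠ 0 := Nat.cast_ne_zero.2 hm.ne'
  have hd1 : (1 : ℝ) ≤ (d : ℝ) := Nat.one_le_cast.2 hd
  set v0 := v ⟨0, hm⟩ with hv0
  -- basic measurability
  have hgm : ∀ i i' : Fin d, Measurable (fun x : EuclideanSpace ℝ (Fin d) => x i * x i') :=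
    fun i i' => ((EuclideanSpace.proj (𝕜 := ℝ) i).measurable.mul
      (EuclideanSpace.proj (𝕜 := ℝ) i').measurable)
  have hfm : ∀ (j) (i i' : Fin d), Measurable (fun ω => v j ω i * v j ω i') :=
    fun j i i' => (hgm i i').comp (hmeas j)
  -- the L⁴ bound transfers to all j
  have hL4j : ∀ j, Integrable (fun ω => ‖v j ω‖ ^ 4) P := fun j =>
    ((hident j ⟨0, hm⟩).comp (measurable_norm.pow_const 4)).integrable_iff.2 hL4
  -- norms and coordinates
  have hnormsq : ∀ x : EuclideanSpace ℝ (Fin d), ‖x‖ ^ 2 = ∑ k, (x k) ^ 2 := by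
    intro x
    rw [EuclideanSpace.norm_eq, Real.sq_sqrt (by positivity)]
    simp [sq_abs]
  have hcoord : ∀ (x : EuclideanSpace ℝ (Fin d)) (i : Fin d), (x i) ^ 2 ≤ ‖x‖ ^ 2 := by
    intro x i
    rw [hnormsq]
    exact Finset.single_le_sum (f := fun k => (x k) ^ 2) (fun k _ => sq_nonneg _)
      (Finset.mem_univ i)
  have hsqle : ∀ (x : EuclideanSpace ℝ (Fin d)) (i i' : Fin d),
      (x i * x i') ^ 2 ≤ ‖x‖ ^ 4 := by
    intro x i i'
    have := mul_le_mul (hcoord x i) (hcoord x i') (sq_nonneg _) (by positivity)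
    calc (x i * x i') ^ 2 = (x i) ^ 2 * (x i') ^ 2 := by ring
      _ ≤ ‖x‖ ^ 2 * ‖x‖ ^ 2 := this
      _ = ‖x‖ ^ 4 := by ring
  -- square integrability
  have hsqint : ∀ (j) (i i' : Fin d), Integrable (fun ω => (v j ω i * v j ω i') ^ 2) P := by
    intro j i i'
    refine (hL4j j).mono' (((hfm j i i').pow_const 2).aestronglyMeasurable) ?_
    filter_upwards with ω
    rw [Real.norm_eq_abs, abs_of_nonneg (sq_nonneg _)]
    exact hsqle _ i i'
  have hmem2 : ∀ (j) (i i' : Fin d), MemLp (fun ω => v j ω i * v j ω i') 2 P :=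
    fun j i i' => (memLp_two_iff_integrable_sq (hfm j i i').aestronglyMeasurable).2
      (hsqint j i i')
  -- identical distribution of entry products
  have hidf : ∀ (j) (i i' : Fin d), IdentDistrib (fun ω => v j ω i * v j ω i')
      (fun ω => v0 ω i * v0 ω i') P P :=
    fun j i i' => (hident j ⟨0, hm⟩).comp (hgm i i')
  have hEf : ∀ (j) (i i' : Fin d),
      ∫ ω, v j ω i * v j ω i' ∂P = ∫ ω, v0 ω i * v0 ω i' ∂P :=
    fun j i i' => (hidf j i i').integral_eq
  have hsqEq : ∀ (j) (i i' : Fin d),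
      ∫ ω, (v j ω i * v j ω i') ^ 2 ∂P = ∫ ω, (v0 ω i * v0 ω i') ^ 2 ∂P :=
    fun j i i' => ((hidf j i i').comp (measurable_id.pow_const 2)).integral_eq
  have hMbar' : ∀ i i', Mbar i i' = ∫ ω, v0 ω i * v0 ω i' ∂P := by
    intro i i'; rw [hMbar]; rfl
  -- pairwise independence of entry products
  have hpair : ∀ i i' : Fin d, Set.Pairwise ↑(Finset.univ : Finset (Fin m))
      fun a b => IndepFun (fun ω => v a ω i * v a ω i') (fun ω => v b ω i * v b ω i') P := by
    intro i i' a _ b _ hab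
    exact (hindep.comp (fun _ x => x i * x i') fun _ => hgm i i').indepFun hab
  -- per-entry second moment bound
  have hentry : ∀ i i' : Fin d,
      ∫ ω, ((m : ℝ)⁻¹ * (∑ j, v j ω i * v j ω i') - Mbar i i') ^ 2 ∂P
        ≤ (m : ℝ)⁻¹ * ∫ ω, (v0 ω i * v0 ω i') ^ 2 ∂P := by
    intro i i'
    have := entry_var_bound P m hm (fun j ω => v j ω i * v j ω i')
      (fun j => hmem2 j i i') (hpair i i') (fun j => hEf j i i') (fun j => hsqEq j i i')
    rw [hMbar' i i']
    exact this
  -- integrability of per-entry squares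
  have hentryint : ∀ i i' : Fin d,
      Integrable (fun ω => ((m : ℝ)⁻¹ * (∑ j, v j ω i * v j ω i') - Mbar i i') ^ 2) P := by
    intro i i'
    have hS : MemLp (fun ω => (m : ℝ)⁻¹ * (∑ j, v j ω i * v j ω i') - Mbar i i') 2 P := by
      have h1 : MemLp (fun ω => ∑ j, v j ω i * v j ω i') 2 P := by
        have := memLp_finset_sum' (μ := P) Finset.univ
          (f := fun j ω => v j ω i * v j ω i') (fun j _ => hmem2 j i i')
        exact this.ae_eq (Filter.Eventually.of_forall fun ω => Finset.sum_apply ω _ _)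
      exact (h1.const_mul _).sub (memLp_const _)
    exact (memLp_two_iff_integrable_sq hS.aestronglyMeasurable).1 hS
  -- notation for the Frobenius-squared process
  set F : Ω → ℝ := fun ω => ∑ i, ∑ i',
      ((m : ℝ)⁻¹ * (∑ j, v j ω i * v j ω i') - Mbar i i') ^ 2 with hFdef
  have hF0 : ∀ ω, 0 ≤ F ω := fun ω => by positivity
  have hFint : Integrable F P :=
    integrable_finset_sum _ fun i _ => integrable_finset_sum _ fun i' _ => hentryint i i'
  -- pointwise identity: double sum of squared products is ‖x‖⁴
  have hpoint : ∀ x : EuclideanSpace ℝ (Fin d), ∑ i, ∑ i', (x i * x i') ^ 2 = ‖x‖ ^ 4 := by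
    intro x
    have h1 : ∑ i, ∑ i', (x i * x i') ^ 2
        = (∑ i, (x i) ^ 2) * (∑ i', (x i') ^ 2) := by
      rw [Finset.sum_mul_sum]
      simp [mul_pow]
    rw [h1, ← hnormsq]
    ring
  -- integral of F
  have hIF : ∫ ω, F ω ∂P ≤ (m : ℝ)⁻¹ * ∫ ω, ‖v0 ω‖ ^ 4 ∂P := by
    rw [hFdef]
    rw [integral_finset_sum _ fun i _ => integrable_finset_sum _ fun i' _ => hentryint i i']
    calc ∑ i, ∫ ω, (∑ i', ((m : ℝ)⁻¹ * (∑ j, v j ω i * v j ω i') - Mbar i i') ^ 2) ∂P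
        = ∑ i, ∑ i', ∫ ω, ((m : ℝ)⁻¹ * (∑ j, v j ω i * v j ω i') - Mbar i i') ^ 2 ∂P :=
          Finset.sum_congr rfl fun i _ => integral_finset_sum _ fun i' _ => hentryint i i'
      _ ≤ ∑ i, ∑ i', (m : ℝ)⁻¹ * ∫ ω, (v0 ω i * v0 ω i') ^ 2 ∂P :=
          Finset.sum_le_sum fun i _ => Finset.sum_le_sum fun i' _ => hentry i i'
      _ = (m : ℝ)⁻¹ * ∑ i, ∑ i', ∫ ω, (v0 ω i * v0 ω i') ^ 2 ∂P := by
          simp_rw [← Finset.mul_sum]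
      _ = (m : ℝ)⁻¹ * ∫ ω, (∑ i, ∑ i', (v0 ω i * v0 ω i') ^ 2) ∂P := by
          rw [integral_finset_sum _ fun i _ => integrable_finset_sum _ fun i' _ =>
            hsqint _ i i']
          congr 1
          exact Finset.sum_congr rfl fun i _ =>
            (integral_finset_sum _ fun i' _ => hsqint _ i i').symm
      _ = (m : ℝ)⁻¹ * ∫ ω, ‖v0 ω‖ ^ 4 ∂P := by
          congr 1
          exact integral_congr_ae (Filter.Eventually.of_forall fun ω => hpoint (v0 ω))
  -- moments of μ₄
  have hI0 : 0 ≤ ∫ ω, ‖v0 ω‖ ^ 4 ∂P := integral_nonneg fun ω => by positivity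
  have hμ0 : 0 ≤ μ₄ := hμ ▸ Real.rpow_nonneg hI0 _
  have hμ4 : μ₄ ^ 4 = ∫ ω, ‖v0 ω‖ ^ 4 ∂P := by
    rw [hμ, ← Real.rpow_natCast (_ ^ ((1 : ℝ) / 4)) 4, ← Real.rpow_mul hI0]
    norm_num
  -- thresholds
  set t : ℝ := μ₄ ^ 2 * δ ^ (-(1 : ℝ) / 2) / Real.sqrt m with ht
  set tstar : ℝ := Real.sqrt 2 * μ₄ ^ 2 / Real.sqrt m * δ ^ (-(1 : ℝ) / 2)
      * Real.log (4 * d / δ) with htstar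
  have hδe0 : 0 ≤ δ ^ (-(1 : ℝ) / 2) := (Real.rpow_pos_of_pos hδ0 _).le
  have hm0R : (0 : ℝ) < m := Nat.cast_pos.2 hm
  have hT0 : 0 ≤ t := by
    rw [ht]
    positivity
  have hlog1 : 1 ≤ Real.log (4 * d / δ) := by
    rw [Real.le_log_iff_exp_le (by positivity)]
    have h4 : (4 : ℝ) ≤ 4 * d / δ := by
      rw [le_div_iff₀ hδ0]
      nlinarith
    calc Real.exp 1 ≤ 2.7182818286 := Real.exp_one_lt_d9.le
      _ ≤ 4 := by norm_num
      _ ≤ _ := h4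
  have hsqrt2 : (1 : ℝ) ≤ Real.sqrt 2 := by
    rw [show (1 : ℝ) = Real.sqrt 1 from Real.sqrt_one.symm]
    exact Real.sqrt_le_sqrt (by norm_num)
  have hTt : t ≤ tstar := by
    have heq : tstar = (Real.sqrt 2 * Real.log (4 * d / δ)) * t := by
      rw [ht, htstar]; ring
    have hc : 1 ≤ Real.sqrt 2 * Real.log (4 * d / δ) := by nlinarith
    rw [heq]
    nlinarith [mul_nonneg (sub_nonneg.2 hc) hT0]
  have htstar0 : 0 ≤ tstar := hT0.trans hTt
  -- operator norm dominated by √F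
  have hopF : ∀ ω, opNorm ((m : ℝ)⁻¹ • ∑ j, vecMulVec (v j ω) (v j ω) - Mbar)
      ≤ Real.sqrt (F ω) := by
    intro ω
    have hent : ∀ i i', ((m : ℝ)⁻¹ • ∑ j, vecMulVec (v j ω) (v j ω) - Mbar) i i'
        = (m : ℝ)⁻¹ * (∑ j, v j ω i * v j ω i') - Mbar i i' := by
      intro i i'
      simp [Matrix.sub_apply, Matrix.smul_apply, Matrix.sum_apply,
        Matrix.vecMulVec_apply, smul_eq_mul]
    have := opNorm_le_frobenius ((m : ℝ)⁻¹ • ∑ j, vecMulVec (v j ω) (v j ω) - Mbar)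
    simpa only [hent, hFdef] using this
  -- reduce to the complement bound
  refine endgame P _ δ hδ0.le hδ1.le ?_
  rcases hμ0.eq_or_lt with h0 | h0
  · -- degenerate case μ₄ = 0 : F = 0 a.e.
    have hIzero : ∫ ω, ‖v0 ω‖ ^ 4 ∂P = 0 := by
      rw [← hμ4, ← h0]; norm_num
    have hFzero : ∫ ω, F ω ∂P = 0 :=
      le_antisymm (hIF.trans (by rw [hIzero]; simp)) (integral_nonneg hF0)
    have hae := (integral_eq_zero_iff_of_nonneg hF0 hFint).1 hFzero
    have hnull : P {ω | ¬ F ω = 0} = 0 := by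
      have := Filter.eventuallyEq_iff_exists_mem.1 hae
      simpa [Filter.EventuallyEq, ae_iff] using hae
    refine le_trans (le_trans (measure_mono ?_) hnull.le) zero_le
    intro ω hω
    simp only [Set.mem_compl_iff, Set.mem_setOf_eq, not_le] at hω
    simp only [Set.mem_setOf_eq]
    intro hFω
    have : opNorm ((m : ℝ)⁻¹ • ∑ j, vecMulVec (v j ω) (v j ω) - Mbar) ≤ 0 := by
      have := hopF ω
      rwa [hFω, Real.sqrt_zero] at this
    exact absurd (this.trans htstar0) (not_le.2 hω)
  · -- main case μ₄ > 0
    have hI_pos : 0 < ∫ ω, ‖v0 ω‖ ^ 4 ∂P := by rw [← hμ4]; positivity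
    have ht_pos : 0 < t := by
      rw [ht]
      have := Real.rpow_pos_of_pos hδ0 (-(1 : ℝ) / 2)
      positivity
    have hmark := mul_meas_ge_le_integral_of_nonneg (μ := P)
      (Filter.Eventually.of_forall hF0) hFint (t ^ 2)
    have ht2 : t ^ 2 = (∫ ω, ‖v0 ω‖ ^ 4 ∂P) * δ⁻¹ / m := by
      have he : (δ ^ (-(1 : ℝ) / 2)) ^ 2 = δ⁻¹ := by
        rw [← Real.rpow_natCast (δ ^ (-(1 : ℝ) / 2)) 2, ← Real.rpow_mul hδ0.le]
        norm_num [Real.rpow_neg_one]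
      rw [ht, div_pow, mul_pow, he, Real.sq_sqrt (Nat.cast_nonneg m), ← pow_mul]
      norm_num [hμ4]
    have hAle : (P {ω | t ^ 2 ≤ F ω}).toReal ≤ δ := by
      have hle : (m : ℝ)⁻¹ * ∫ ω, ‖v0 ω‖ ^ 4 ∂P = t ^ 2 * δ := by
        rw [ht2]
        field_simp
      have h1 : t ^ 2 * (P {ω | t ^ 2 ≤ F ω}).toReal ≤ t ^ 2 * δ := by
        calc t ^ 2 * (P {ω | t ^ 2 ≤ F ω}).toReal ≤ ∫ ω, F ω ∂P := hmark
          _ ≤ (m : ℝ)⁻¹ * ∫ ω, ‖v0 ω‖ ^ 4 ∂P := hIF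
          _ = t ^ 2 * δ := hle
      exact le_of_mul_le_mul_left h1 (by positivity)
    have hsub : {ω | opNorm ((m : ℝ)⁻¹ • ∑ j, vecMulVec (v j ω) (v j ω) - Mbar) ≤ tstar}ᶜ
        ⊆ {ω | t ^ 2 ≤ F ω} := by
      intro ω hω
      simp only [Set.mem_compl_iff, Set.mem_setOf_eq, not_le] at hω
      simp only [Set.mem_setOf_eq]
      have h2 : t < Real.sqrt (F ω) := lt_of_le_of_lt hTt (lt_of_lt_of_le hω (hopF ω))
      nlinarith [Real.sq_sqrt (hF0 ω), Real.sqrt_nonneg (F ω)]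
    refine le_trans (measure_mono hsub) ?_
    rw [← ENNReal.ofReal_toReal (measure_ne_top P {ω | t ^ 2 ≤ F ω})]
    exact ENNReal.ofReal_le_ofReal hAle
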